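/- Let d ≥ 1 be an integer, 0 < r ≤ 1, and let q ≥ 1 be a real number. There exists a constant C > 0, depending only on d, r and q, such that for all integers n ≥ 2, sup over K ∈ K_{d,r}^(1) of E_K[d_H(K̂ₙ,K)^q] ≤ C·(ln n / n)^{2q/(d+1)}. -/

import Mathlib

open MeasureTheory Metric Set
open scoped RealInnerProductSpace ENNReal NNReal

noncomputable section

abbrev Euc (d : ℕ) := EuclideanSpace ℝ (Fin d)

def IsConvexBody {d : ℕ} (K : Set (Euc d)) : Prop :=
  Convex ℝ K ∧ IsCompact K ∧ (interior K).Nonempty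

def suppFn {d : ℕ} (K : Set (Euc d)) (u : Euc d) : ℝ :=
  sSup ((fun x => (inner ℝ u x : ℝ)) '' K)

def cap {d : ℕ} (K : Set (Euc d)) (u : Euc d) (ε : ℝ) : Set (Euc d) :=
  {x ∈ K | suppFn K u - ε ≤ (inner ℝ u x : ℝ)}

def measSupp {d : ℕ} (μ : Measure (Euc d)) : Set (Euc d) :=
  (⋃₀ {O : Set (Euc d) | IsOpen O ∧ μ O = 0})ᶜ

def MemM {d : ℕ} (α L ε₀ : ℝ) (μ : Measure (Euc d)) (K : Set (Euc d)) : Prop :=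
  IsProbabilityMeasure μ ∧ IsConvexBody K ∧ K ⊆ closedBall 0 1 ∧
    measSupp μ ⊆ K ∧
    ∀ u : Euc d, ‖u‖ = 1 → ∀ ε : ℝ, ε ∈ Icc 0 ε₀ →
      ENNReal.ofReal (L * ε ^ α) ≤ μ (cap K u ε)

def Cconst (α : ℝ) : ℝ := ⨅ t : {t : ℝ // 0 < t}, (1 + t.1) ^ α / (1 + t.1 ^ α)

def hullOf {d n : ℕ} (ω : Fin n → Euc d) : Set (Euc d) := convexHull ℝ (Set.range ω)

def jointLaw {d : ℕ} (n : ℕ) (μ : Measure (Euc d)) : Measure (Fin n → Euc d) :=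
  Measure.pi fun _ => μ

def sphereσ (d : ℕ) : Measure (Euc d) :=
  (Measure.hausdorffMeasure ((d:ℝ)-1) (sphere (0:Euc d) 1))⁻¹ •
    (Measure.hausdorffMeasure ((d:ℝ)-1) : Measure (Euc d)).restrict (sphere (0:Euc d) 1)

def lpNorm (d : ℕ) (p : ℝ) (f : Euc d → ℝ) : ℝ :=
  (∫ u, |f u| ^ p ∂(sphereσ d)) ^ (1/p)

def unitBallVol (p : ℕ) : ℝ := (volume (closedBall (0 : Euc p) 1)).toReal

def unifOn {d : ℕ} (K : Set (Euc d)) : Measure (Euc d) := (volume K)⁻¹ • volume.restrict K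

def unifBd {d : ℕ} (K : Set (Euc d)) : Measure (Euc d) :=
  (Measure.hausdorffMeasure ((d:ℝ)-1) (frontier K))⁻¹ •
    (Measure.hausdorffMeasure ((d:ℝ)-1) : Measure (Euc d)).restrict (frontier K)

def Rolling {d : ℕ} (r : ℝ) (K : Set (Euc d)) : Prop :=
  ∀ x ∈ frontier K, ∃ c : Euc d, x ∈ closedBall c r ∧ closedBall c r ⊆ K

def Kdr1 (d : ℕ) (r : ℝ) : Set (Set (Euc d)) :=
  {K | IsConvexBody K ∧ K ⊆ closedBall 0 1 ∧ Rolling r K}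

def Krd (d : ℕ) (r : ℝ) : Set (Set (Euc d)) :=
  {K | IsConvexBody K ∧ Rolling (r * ((volume K).toReal / unitBallVol d) ^ (1/(d:ℝ))) K}

def dL {d : ℕ} (K K' : Set (Euc d)) : ℝ :=
  sInf {ε : ℝ | 0 ≤ ε ∧ ∃ a : Euc d,
    (fun y => a + (1 - ε) • (y - a)) '' K ⊆ K' ∧
    K' ⊆ (fun y => a + (1 + ε) • (y - a)) '' K}

open scoped Pointwise

set_option maxHeartbeats 1000000
-- maximizer of inner product, equals suppFn, lies on frontier, rolling ball center relation
lemma suppFn_exists_max {d : ℕ} {K : Set (Euc d)} (hcpt : IsCompact K) (hne : K.Nonempty)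
    (u : Euc d) :
    ∃ z ∈ K, (∀ y ∈ K, (inner ℝ u y : ℝ) ≤ inner ℝ u z) ∧ suppFn K u = inner ℝ u z := by
  obtain ⟨z, hzK, hz⟩ := hcpt.exists_isMaxOn hne
    ((innerSL ℝ u).continuous.continuousOn)
  refine ⟨z, hzK, fun y hy => hz hy, ?_⟩
  have : IsGreatest ((fun x => (inner ℝ u x : ℝ)) '' K) (inner ℝ u z) :=
    ⟨⟨z, hzK, rfl⟩, fun a ⟨y, hy, hya⟩ => hya ▸ hz hy⟩
  exact this.csSup_eq.symm ▸ rfl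

lemma max_mem_frontier {d : ℕ} {K : Set (Euc d)} (hcl : IsClosed K)
    {u : Euc d} (hu : ‖u‖ = 1) {z : Euc d} (hzK : z ∈ K)
    (hmax : ∀ y ∈ K, (inner ℝ u y : ℝ) ≤ inner ℝ u z) : z ∈ frontier K := by
  rw [hcl.frontier_eq]
  refine ⟨hzK, fun hzint => ?_⟩
  obtain ⟨δ, hδ0, hδ⟩ := Metric.isOpen_iff.1 isOpen_interior z hzint
  have hy : z + (δ/2) • u ∈ K := by
    apply interior_subset
    apply hδ
    simp only [mem_ball, dist_self_add_left, norm_smul, Real.norm_eq_abs, hu, mul_one]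
    rw [abs_of_pos (by linarith)]; linarith
  have := hmax _ hy
  rw [inner_add_right, real_inner_smul_right, real_inner_self_eq_norm_sq, hu] at this
  nlinarith

def ellMap {d : ℕ} (u : Euc d) (ρ γ : ℝ) : Euc d →ₗ[ℝ] Euc d :=
  ρ • LinearMap.id + γ • ((innerSL ℝ u).toLinearMap.smulRight u)

lemma ellMap_apply {d : ℕ} (u : Euc d) (ρ γ : ℝ) (w : Euc d) :
    ellMap u ρ γ w = ρ • w + (γ * (inner ℝ u w : ℝ)) • u := by
  simp [ellMap, mul_smul]

-- ellipsoid inside cap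
lemma ellipsoid_subset_cap {d : ℕ} {K : Set (Euc d)} {r ε : ℝ}
    (hr0 : 0 < r) (hε0 : 0 < ε) (hεr : ε ≤ r)
    {u : Euc d} (hu : ‖u‖ = 1) {c : Euc d} (hcK : closedBall c r ⊆ K)
    (hc : (inner ℝ u c : ℝ) = suppFn K u - r) :
    (fun w => (c + (r - ε/2) • u) + ellMap u (Real.sqrt (r*ε)/2) (ε/2 - Real.sqrt (r*ε)/2) w) ''
      closedBall 0 1 ⊆ cap K u ε := by
  set ρ := Real.sqrt (r*ε)/2 with hρdef
  have hρsq : ρ^2 = r*ε/4 := by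
    rw [hρdef, div_pow, Real.sq_sqrt (by positivity)]; ring
  rintro y ⟨w, hw, rfl⟩
  simp only [mem_closedBall, dist_zero_right] at hw
  set t := (inner ℝ u w : ℝ) with ht
  have htle : |t| ≤ 1 := by
    calc |t| ≤ ‖u‖ * ‖w‖ := abs_real_inner_le_norm u w
      _ ≤ 1 := by rw [hu, one_mul]; exact hw
  set w' := w - t • u with hw'
  have hw'u : (inner ℝ u w' : ℝ) = 0 := by
    rw [hw', inner_sub_right, real_inner_smul_right, real_inner_self_eq_norm_sq, hu]
    ring
  have hwsplit : w = t • u + w' := by rw [hw']; abel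
  have hw'norm : ‖w'‖^2 ≤ 1 - t^2 := by
    have : ‖w‖^2 = t^2 + ‖w'‖^2 := by
      rw [hwsplit, norm_add_sq_real, real_inner_smul_left, hw'u, norm_smul,
        Real.norm_eq_abs, hu, mul_one, sq_abs]
      ring
    nlinarith [norm_nonneg w, norm_nonneg w']
  set a := r - ε/2 + (ε/2) * t with ha
  have hy : (c + (r - ε/2) • u) + ellMap u ρ (ε/2 - ρ) w = c + a • u + ρ • w' := by
    rw [ellMap_apply, ← ht, hwsplit]
    simp only [smul_add, smul_smul]
    rw [ha]
    module
  simp only []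
  rw [hy]
  have hmem : c + a • u + ρ • w' ∈ closedBall c r := by
    simp only [mem_closedBall]
    rw [dist_eq_norm]
    have heq : c + a • u + ρ • w' - c = a • u + ρ • w' := by abel
    rw [heq]
    have hsq : ‖a • u + ρ • w'‖^2 = a^2 + ρ^2 * ‖w'‖^2 := by
      rw [norm_add_sq_real, real_inner_smul_left, real_inner_smul_right, hw'u, norm_smul,
        norm_smul, Real.norm_eq_abs, Real.norm_eq_abs, hu, mul_one, mul_pow, sq_abs, sq_abs]
      ring
    have hle : ‖a • u + ρ • w'‖^2 ≤ r^2 := by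
      rw [hsq]
      have h1 : ρ^2 * ‖w'‖^2 ≤ (r*ε/4) * (1 - t^2) := by
        rw [hρsq]
        apply mul_le_mul_of_nonneg_left hw'norm (by positivity)
      have h2 : -1 ≤ t := neg_le_of_abs_le htle
      have h3 : t ≤ 1 := le_of_abs_le htle
      have h4 : 0 ≤ ε*(1-t)*(4*r - ε*(1-t) - r*(1+t)) := by
        apply mul_nonneg (mul_nonneg hε0.le (by linarith))
        nlinarith
      rw [ha]
      nlinarith [h4, h1]
    have := Real.sqrt_le_sqrt hle
    rwa [Real.sqrt_sq (norm_nonneg _), Real.sqrt_sq hr0.le] at this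
  refine ⟨hcK hmem, ?_⟩
  rw [inner_add_right, inner_add_right, real_inner_smul_right, real_inner_smul_right,
    real_inner_self_eq_norm_sq, hu, hw'u, hc]
  have h2 : -1 ≤ t := neg_le_of_abs_le htle
  have h5 : 0 ≤ ε * (1 + t) := mul_nonneg hε0.le (by linarith)
  rw [ha]
  nlinarith [h5]

lemma sum_sq_eq_one {d : ℕ} (u : Euc d) (hu : ‖u‖ = 1) : ∑ i, u i * u i = 1 := by
  have h := EuclideanSpace.norm_eq u
  rw [hu] at h
  have h2 : ∑ i, ‖u i‖ ^ 2 = 1 := by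
    rwa [eq_comm, Real.sqrt_eq_one] at h
  calc ∑ i, u i * u i = ∑ i, ‖u i‖ ^ 2 := by
        refine Finset.sum_congr rfl fun i _ => ?_
        rw [Real.norm_eq_abs, sq_abs, sq]
    _ = 1 := h2

lemma ellMap_det {d : ℕ} (hd : 1 ≤ d) (u : Euc d) (hu : ‖u‖ = 1) (ρ γ : ℝ) (hρ : ρ ≠ 0) :
    LinearMap.det (ellMap u ρ γ) = ρ ^ (d - 1) * (ρ + γ) := by
  classical
  have hsum : ∑ i, u i * u i = 1 := sum_sq_eq_one u hu
  set b := (EuclideanSpace.basisFun (Fin d) ℝ).toBasis with hb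
  have hM : LinearMap.toMatrix b b (ellMap u ρ γ) =
      ρ • (1 : Matrix (Fin d) (Fin d) ℝ) + γ • Matrix.vecMulVec u u := by
    ext i j
    rw [LinearMap.toMatrix_apply, ellMap_apply]
    simp only [hb, OrthonormalBasis.coe_toBasis, EuclideanSpace.basisFun_apply,
      OrthonormalBasis.coe_toBasis_repr_apply, EuclideanSpace.basisFun_repr,
      Matrix.add_apply, Matrix.smul_apply, Matrix.one_apply, Matrix.vecMulVec_apply,
      PiLp.add_apply, PiLp.smul_apply, EuclideanSpace.single_apply,
      EuclideanSpace.inner_single_right, smul_eq_mul]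
    by_cases hij : i = j <;> simp [hij] <;> ring
  have hdet := LinearMap.det_toMatrix b (ellMap u ρ γ)
  rw [← hdet, hM]
  have hfac : ρ • (1 : Matrix (Fin d) (Fin d) ℝ) + γ • Matrix.vecMulVec u u =
      ρ • ((1 : Matrix (Fin d) (Fin d) ℝ) +
        Matrix.replicateCol Unit ((γ/ρ) • u) * Matrix.replicateRow Unit u) := by
    rw [← Matrix.vecMulVec_eq Unit, smul_add]
    congr 1
    ext i j
    simp [Matrix.vecMulVec_apply]
    field_simp
  rw [hfac, Matrix.det_smul, Matrix.det_one_add_replicateCol_mul_replicateRow]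
  have : dotProduct u ((γ / ρ) • u) = γ / ρ := by
    simp only [dotProduct, Pi.smul_apply, smul_eq_mul]
    calc ∑ i, u i * (γ / ρ * u i) = (γ / ρ) * ∑ i, u i * u i := by
          rw [Finset.mul_sum]; exact Finset.sum_congr rfl fun i _ => by ring
      _ = γ / ρ := by rw [hsum, mul_one]
  rw [WithLp.ofLp_smul, this]
  have hcard : Fintype.card (Fin d) = d := Fintype.card_fin d
  rw [hcard]
  have : d = (d - 1) + 1 := (Nat.succ_pred_eq_of_pos hd).symm
  rw [this, pow_succ]
  field_simp
  rw [Nat.add_sub_cancel]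
  ring

lemma cap_closed {d : ℕ} {K : Set (Euc d)} (hcl : IsClosed K) (u : Euc d) (ε : ℝ) :
    IsClosed (cap K u ε) := by
  have : cap K u ε = K ∩ (fun x => (inner ℝ u x : ℝ)) ⁻¹' (Ici (suppFn K u - ε)) := rfl
  rw [this]
  exact hcl.inter (isClosed_Ici.preimage (innerSL ℝ u).continuous)

-- the key cap measure lower bound
lemma cap_measure_lb {d : ℕ} (hd : 1 ≤ d) {r : ℝ} (hr0 : 0 < r) {K : Set (Euc d)}
    (hK : K ∈ Kdr1 d r) {u : Euc d} (hu : ‖u‖ = 1) {ε : ℝ} (hε0 : 0 < ε) (hεr : ε ≤ r) :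
    ENNReal.ofReal ((Real.sqrt (r*ε)/2) ^ (d-1) * (ε/2)) ≤ unifOn K (cap K u ε) := by
  obtain ⟨⟨hconv, hcpt, hint⟩, hsub, hroll⟩ := hK
  have hne : K.Nonempty := hint.mono interior_subset
  obtain ⟨z, hzK, hmax, hsupp⟩ := suppFn_exists_max hcpt hne u
  have hzf : z ∈ frontier K := max_mem_frontier hcpt.isClosed hu hzK hmax
  obtain ⟨c, hzc, hcK⟩ := hroll z hzf
  have hc : (inner ℝ u c : ℝ) = suppFn K u - r := by
    have h1 : (inner ℝ u c : ℝ) + r ≤ suppFn K u := by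
      have hmem : c + r • u ∈ K := hcK (by
        simp [mem_closedBall, dist_self_add_left, norm_smul, Real.norm_eq_abs, hu,
          abs_of_pos hr0, le_refl])
      have := hmax _ hmem
      rw [inner_add_right, real_inner_smul_right, real_inner_self_eq_norm_sq, hu] at this
      rw [hsupp]; nlinarith
    have h2 : suppFn K u ≤ (inner ℝ u c : ℝ) + r := by
      rw [hsupp]
      have : (inner ℝ u (z - c) : ℝ) ≤ ‖z - c‖ := by
        calc (inner ℝ u (z - c) : ℝ) ≤ ‖u‖ * ‖z - c‖ := real_inner_le_norm u (z - c)
          _ = ‖z - c‖ := by rw [hu, one_mul]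
      have hzc' : ‖z - c‖ ≤ r := by rwa [mem_closedBall, dist_eq_norm] at hzc
      have := inner_sub_right (𝕜 := ℝ) u z c
      nlinarith
    linarith
  set ρ := Real.sqrt (r*ε)/2 with hρdef
  have hρpos : 0 < ρ := by rw [hρdef]; positivity
  -- ellipsoid
  set m := c + (r - ε/2) • u with hm
  have hEsub : (fun w => m + ellMap u ρ (ε/2 - ρ) w) '' closedBall 0 1 ⊆ cap K u ε :=
    ellipsoid_subset_cap hr0 hε0 hεr hu hcK hc
  have hcapm : MeasurableSet (cap K u ε) := (cap_closed hcpt.isClosed u ε).measurableSet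
  -- volume of ellipsoid
  have hvol : volume ((fun w => m + ellMap u ρ (ε/2 - ρ) w) '' closedBall 0 1) =
      ENNReal.ofReal (ρ^(d-1) * (ε/2)) * volume (closedBall (0:Euc d) 1) := by
    have himg : (fun w => m + ellMap u ρ (ε/2 - ρ) w) '' closedBall 0 1 =
        m +ᵥ (ellMap u ρ (ε/2 - ρ) '' closedBall 0 1) := by
      rw [← Set.image_vadd, Set.image_image]; rfl
    rw [himg, measure_vadd, Measure.addHaar_image_linearMap,
      ellMap_det hd u hu ρ (ε/2 - ρ) hρpos.ne']
    congr 2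
    rw [abs_of_pos]
    · ring
    · have : ρ + (ε/2 - ρ) = ε/2 := by ring
      nlinarith [pow_pos hρpos (d-1)]
  -- put it together
  have hKvol_le : volume K ≤ volume (closedBall (0:Euc d) 1) := measure_mono hsub
  have hBpos : 0 < volume (closedBall (0:Euc d) 1) := measure_closedBall_pos _ _ one_pos
  have hBfin : volume (closedBall (0:Euc d) 1) < ⊤ := measure_closedBall_lt_top
  have hcapvol : ENNReal.ofReal (ρ^(d-1) * (ε/2)) * volume (closedBall (0:Euc d) 1) ≤
      volume (cap K u ε) := hvol ▸ measure_mono hEsub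
  rw [unifOn, Measure.smul_apply, Measure.restrict_apply hcapm, smul_eq_mul]
  have hcapK : cap K u ε ∩ K = cap K u ε := by
    apply inter_eq_self_of_subset_left; exact fun x hx => hx.1
  rw [hcapK]
  calc ENNReal.ofReal (ρ^(d-1) * (ε/2))
      = ENNReal.ofReal (ρ^(d-1) * (ε/2)) * (volume (closedBall (0:Euc d) 1) *
        (volume (closedBall (0:Euc d) 1))⁻¹) := by
        rw [ENNReal.mul_inv_cancel hBpos.ne' hBfin.ne, mul_one]
    _ = (volume (closedBall (0:Euc d) 1))⁻¹ *
        (ENNReal.ofReal (ρ^(d-1) * (ε/2)) * volume (closedBall (0:Euc d) 1)) := by ring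
    _ ≤ (volume K)⁻¹ * volume (cap K u ε) := by
        exact mul_le_mul' (ENNReal.inv_le_inv.2 hKvol_le) hcapvol

lemma abs_coord_le_norm {d : ℕ} (u : Euc d) (i : Fin d) : |u i| ≤ ‖u‖ := by
  rw [EuclideanSpace.norm_eq]
  have h1 : |u i| = Real.sqrt ((u i)^2) := (Real.sqrt_sq_eq_abs _).symm
  rw [h1]
  apply Real.sqrt_le_sqrt
  calc (u i)^2 = ‖u i‖^2 := by rw [Real.norm_eq_abs, sq_abs]
    _ ≤ ∑ j, ‖u j‖^2 := Finset.single_le_sum (f := fun j => ‖u j‖^2) (fun j _ => sq_nonneg _) (Finset.mem_univ i)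

lemma exists_net (d : ℕ) (hd : 1 ≤ d) {ε : ℝ} (hε0 : 0 < ε) (hε1 : ε ≤ 1) :
    ∃ S : Finset (Euc d), (∀ v ∈ S, ‖v‖ = 1) ∧
      (∀ u : Euc d, ‖u‖ = 1 → ∃ v ∈ S, ‖u - v‖ ≤ ε) ∧
      (S.card : ℝ) ≤ ((4*Real.sqrt d + 5)/ε)^d := by
  classical
  have hd0 : (0:ℝ) < Real.sqrt d := Real.sqrt_pos.2 (by exact_mod_cast hd)
  set h : ℝ := ε / (2 * Real.sqrt d) with hh
  have hhpos : 0 < h := by positivity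
  set M : ℕ := ⌈1/h⌉₊ + 1 with hM
  have hMlb : 1/h + 1/2 ≤ (M:ℝ) := by
    have := Nat.le_ceil (1/h)
    push_cast [hM]
    linarith
  set T : Finset (Fin d → ℤ) := Fintype.piFinset (fun _ => Finset.Icc (-(M:ℤ)) M) with hT
  set u₀ : Euc d := EuclideanSpace.single ⟨0, hd⟩ 1 with hu₀
  have hu₀n : ‖u₀‖ = 1 := by simp [hu₀]
  set gridPt : (Fin d → ℤ) → Euc d :=
    fun k => (WithLp.equiv 2 (Fin d → ℝ)).symm (fun i => h * k i) with hgrid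
  set S : Finset (Euc d) :=
    (T.image gridPt).image (fun g => if g = (0:Euc d) then u₀ else ‖g‖⁻¹ • g) with hS
  refine ⟨S, ?_, ?_, ?_⟩
  · intro v hv
    simp only [hS, Finset.mem_image] at hv
    obtain ⟨g, _, rfl⟩ := hv
    by_cases hg : g = 0
    · simp [hg, hu₀n]
    · simp only [hg, if_false]
      rw [norm_smul, Real.norm_eq_abs, abs_of_nonneg (inv_nonneg.2 (norm_nonneg _)), inv_mul_cancel₀]
      exact norm_ne_zero_iff.2 hg
  · intro u hu
    set k : Fin d → ℤ := fun i => round (u i / h) with hk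
    have hkT : k ∈ T := by
      simp only [hT, Fintype.mem_piFinset, Finset.mem_Icc]
      intro i
      have h1 : |(k i : ℝ)| ≤ 1/h + 1/2 := by
        have h2 : |u i / h - round (u i / h)| ≤ 1/2 := abs_sub_round _
        have h3 : |u i / h| ≤ 1/h := by
          rw [abs_div, abs_of_pos hhpos, div_le_div_iff_of_pos_right hhpos]
          calc |u i| ≤ ‖u‖ := abs_coord_le_norm u i
            _ = 1 := hu
        calc |(k i : ℝ)| = |u i / h - (u i / h - k i)| := by rw [hk]; ring_nf
          _ ≤ |u i / h| + |u i / h - k i| := abs_sub _ _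
          _ ≤ 1/h + 1/2 := add_le_add h3 h2
      have h5 : |(k i : ℝ)| ≤ (M:ℝ) := h1.trans hMlb
      have h6 : |k i| ≤ (M:ℤ) := by exact_mod_cast h5
      exact abs_le.1 h6
    set g := gridPt k with hg
    have hug : ‖u - g‖ ≤ ε/4 := by
      rw [EuclideanSpace.norm_eq]
      have hcoord : ∀ i, ‖(u - g) i‖^2 ≤ (h/2)^2 := by
        intro i
        have : (u - g) i = u i - h * k i := by
          simp [hg, hgrid, WithLp.equiv_symm_apply, PiLp.toLp_apply]
        rw [this, Real.norm_eq_abs, sq_abs]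
        have heq2 : u i - h * k i = h * (u i / h - k i) := by field_simp
        have h2 : |u i - h * k i| ≤ h/2 := by
          rw [heq2, abs_mul, abs_of_pos hhpos]
          calc h * |u i / h - k i| ≤ h * (1/2) := by
                exact mul_le_mul_of_nonneg_left (abs_sub_round _) hhpos.le
            _ = h/2 := by ring
        have h3 := abs_le.1 h2
        nlinarith [h3.1, h3.2]
      calc Real.sqrt (∑ i, ‖(u - g) i‖^2) ≤ Real.sqrt (∑ _i : Fin d, (h/2)^2) := by
            apply Real.sqrt_le_sqrt
            exact Finset.sum_le_sum fun i _ => hcoord i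
        _ = Real.sqrt (d * (h/2)^2) := by rw [Finset.sum_const, Finset.card_univ,
            Fintype.card_fin, nsmul_eq_mul]
        _ = Real.sqrt d * (h/2) := by
            rw [Real.sqrt_mul (by positivity), Real.sqrt_sq (by positivity)]
        _ = ε/4 := by rw [hh]; field_simp; ring
    have hgn : ‖g‖ ≥ 3/4 := by
      have h1 : ‖u‖ - ‖u - g‖ ≤ ‖g‖ := by
        have := norm_sub_norm_le u g
        have h2 : ‖u‖ - ‖g‖ ≤ ‖u - g‖ := this
        linarith
      rw [hu] at h1
      linarith [hug, hε1]
    have hgne : g ≠ 0 := by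
      intro h0
      rw [h0, norm_zero] at hgn
      linarith
    set v := ‖g‖⁻¹ • g with hv
    refine ⟨v, ?_, ?_⟩
    · have hveq : v = (fun g' => if g' = (0:Euc d) then u₀ else ‖g'‖⁻¹ • g') g := by
        simp [hgne, hv]
      rw [hS, hveq]
      exact Finset.mem_image_of_mem _ (Finset.mem_image_of_mem _ hkT)
    · have hgv : ‖g - v‖ = |‖g‖ - 1| := by
        rw [hv]
        have : g - ‖g‖⁻¹ • g = (1 - ‖g‖⁻¹) • g := by module
        rw [this, norm_smul, Real.norm_eq_abs]
        have hgpos : 0 < ‖g‖ := by linarith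
        rw [← abs_of_pos hgpos, ← abs_mul]
        congr 1
        simp only [abs_norm]
        field_simp
      have h1 : |‖g‖ - 1| ≤ ε/4 := by
        have := abs_norm_sub_norm_le g u
        rw [hu] at this
        calc |‖g‖ - 1| ≤ ‖g - u‖ := this
          _ = ‖u - g‖ := by rw [norm_sub_rev]
          _ ≤ ε/4 := hug
      calc ‖u - v‖ ≤ ‖u - g‖ + ‖g - v‖ := by
            have : u - v = (u - g) + (g - v) := by abel
            rw [this]; exact norm_add_le _ _
        _ ≤ ε/4 + ε/4 := add_le_add hug (hgv ▸ h1)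
        _ ≤ ε := by linarith
  · have hcard1 : S.card ≤ T.card := le_trans (Finset.card_image_le)
      (le_trans (Finset.card_image_le) le_rfl)
    have hcard2 : T.card = (2*M+1)^d := by
      rw [hT, Fintype.card_piFinset]
      have : (Finset.Icc (-(M:ℤ)) M).card = 2*M+1 := by
        rw [Int.card_Icc]
        omega
      simp [this]
    have hM2 : (2*M+1 : ℝ) ≤ (4*Real.sqrt d + 5)/ε := by
      have hceil : (⌈1/h⌉₊ : ℝ) ≤ 1/h + 1 := by
        have := Nat.ceil_lt_add_one (le_of_lt (by positivity : (0:ℝ) < 1/h))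
        linarith
      have h1h : 1/h = 2*Real.sqrt d/ε := by rw [hh]; field_simp
      have : (M:ℝ) ≤ 2*Real.sqrt d/ε + 2 := by
        rw [hM] ; push_cast; rw [← h1h]; linarith
      have hd1 : 1 ≤ 1/ε := by rw [le_div_iff₀ hε0]; linarith
      calc (2*M+1 : ℝ) ≤ 2*(2*Real.sqrt d/ε + 2) + 1 := by push_cast; linarith
        _ = 4*Real.sqrt d/ε + 5 := by ring
        _ ≤ 4*Real.sqrt d/ε + 5*(1/ε) := by nlinarith
        _ = (4*Real.sqrt d + 5)/ε := by field_simp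
    calc (S.card : ℝ) ≤ ((2*M+1)^d : ℕ) := by exact_mod_cast hcard2 ▸ Nat.cast_le.2 hcard1
      _ = ((2*M+1 : ℕ) : ℝ)^d := by push_cast; ring
      _ ≤ ((4*Real.sqrt d + 5)/ε)^d := by
          apply pow_le_pow_left₀ (by positivity)
          exact_mod_cast hM2


lemma suppFn_le_add {d : ℕ} {K : Set (Euc d)} (hne : K.Nonempty) (hcpt : IsCompact K)
    (hsub : K ⊆ closedBall 0 1) {u v : Euc d} {ε : ℝ} (huv : ‖u - v‖ ≤ ε) :
    suppFn K u ≤ suppFn K v + ε := by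
  have hbdd : BddAbove ((fun x => (inner ℝ v x : ℝ)) '' K) :=
    (hcpt.image (innerSL ℝ v).continuous).bddAbove
  apply csSup_le (hne.image _)
  · rintro a ⟨y, hy, rfl⟩
    have h1 : (inner ℝ u y : ℝ) - inner ℝ v y = inner ℝ (u - v) y := by
      rw [inner_sub_left]
    have h2 : (inner ℝ (u - v) y : ℝ) ≤ ε := by
      calc (inner ℝ (u - v) y : ℝ) ≤ ‖u - v‖ * ‖y‖ := real_inner_le_norm _ _
        _ ≤ ε * 1 := by
            apply mul_le_mul huv _ (norm_nonneg _) ((norm_nonneg _).trans huv)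
            simpa [mem_closedBall, dist_zero_right] using hsub hy
        _ = ε := mul_one ε
    have h3 : (inner ℝ v y : ℝ) ≤ suppFn K v := le_csSup hbdd ⟨y, hy, rfl⟩
    linarith

lemma bad_event_subset {d n : ℕ} (hn : 1 ≤ n) {K : Set (Euc d)} (hconv : Convex ℝ K)
    (hcpt : IsCompact K) (hne : K.Nonempty) (hsub : K ⊆ closedBall 0 1) {ε : ℝ} (hε0 : 0 < ε)
    (S : Finset (Euc d)) (hSnet : ∀ u : Euc d, ‖u‖ = 1 → ∃ v ∈ S, ‖u - v‖ ≤ ε)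
    {ω : Fin n → Euc d} (hω : ∀ i, ω i ∈ K)
    (hbad : 3 * ε < hausdorffDist (hullOf ω) K) :
    ∃ v ∈ S, ∀ i, ω i ∉ cap K v ε := by
  set H := hullOf ω with hH
  have hHsub : H ⊆ K := convexHull_min (by rintro x ⟨i, rfl⟩; exact hω i) hconv
  have hHne : H.Nonempty := ⟨ω ⟨0, hn⟩, subset_convexHull ℝ _ ⟨⟨0, hn⟩, rfl⟩⟩
  have hHcpt : IsCompact H := (Set.finite_range ω).isCompact_convexHull ℝ
  -- find far point
  have hfar : ∃ x ∈ K, 3 * ε < infDist x H := by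
    by_contra hcon
    push_neg at hcon
    have : hausdorffDist H K ≤ 3 * ε := by
      apply hausdorffDist_le_of_infDist (by linarith)
      · intro x hx
        rw [infDist_zero_of_mem (hHsub hx)]
        linarith
      · exact fun y hy => hcon y hy
    linarith
  obtain ⟨x, hxK, hxfar⟩ := hfar
  obtain ⟨p, hpH, hpdist⟩ := hHcpt.exists_infDist_eq_dist hHne x
  have hD : 3 * ε < dist x p := hpdist ▸ hxfar
  have hxp : x ≠ p := by
    intro h; rw [h, dist_self] at hD; linarith
  have hxpn : 0 < ‖x - p‖ := by
    rwa [norm_sub_pos_iff]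
  -- obtuse angle
  have hobt : ∀ w ∈ H, (inner ℝ (x - p) (w - p) : ℝ) ≤ 0 := by
    have h2 := infDist_eq_iInf (s := H) (x := x)
    rw [hpdist] at h2
    have h1 : ‖x - p‖ = ⨅ w : H, ‖x - w‖ := by
      simp only [dist_eq_norm] at h2
      exact h2
    exact (norm_eq_iInf_iff_real_inner_le_zero (convex_convexHull ℝ _) hpH).1 h1
  set u := ‖x - p‖⁻¹ • (x - p) with hudef
  have hu : ‖u‖ = 1 := by
    rw [hudef, norm_smul, Real.norm_eq_abs, abs_of_pos (inv_pos.2 hxpn), inv_mul_cancel₀ hxpn.ne']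
  have hup : ∀ w ∈ H, (inner ℝ u w : ℝ) ≤ inner ℝ u p := by
    intro w hw
    have h3 : (inner ℝ u (w - p) : ℝ) ≤ 0 := by
      rw [hudef, real_inner_smul_left]
      exact mul_nonpos_of_nonneg_of_nonpos (inv_pos.2 hxpn).le (hobt w hw)
    have := inner_sub_right (𝕜 := ℝ) u w p
    linarith
  have hux : (inner ℝ u x : ℝ) = inner ℝ u p + ‖x - p‖ := by
    have h4 : (inner ℝ u (x - p) : ℝ) = ‖x - p‖ := by
      rw [hudef, real_inner_smul_left, real_inner_self_eq_norm_sq]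
      field_simp
    have := inner_sub_right (𝕜 := ℝ) u x p
    linarith
  have hsuppu : inner ℝ u p + 3 * ε < suppFn K u := by
    have hbdd : BddAbove ((fun y => (inner ℝ u y : ℝ)) '' K) :=
      (hcpt.image (innerSL ℝ u).continuous).bddAbove
    have h5 : (inner ℝ u x : ℝ) ≤ suppFn K u := le_csSup hbdd ⟨x, hxK, rfl⟩
    rw [hux] at h5
    rw [dist_eq_norm] at hD
    linarith
  obtain ⟨v, hvS, hv⟩ := hSnet u hu
  refine ⟨v, hvS, fun i hcap => ?_⟩
  obtain ⟨hωiK, hωicap⟩ := hcap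
  -- inner v (ω i) ≤ inner u (ω i) + ε ≤ inner u p + ε
  have hωiH : ω i ∈ H := subset_convexHull ℝ _ ⟨i, rfl⟩
  have h6 : (inner ℝ v (ω i) : ℝ) ≤ inner ℝ u (ω i) + ε := by
    have h7 : (inner ℝ (v - u) (ω i) : ℝ) ≤ ε := by
      calc (inner ℝ (v - u) (ω i) : ℝ) ≤ ‖v - u‖ * ‖ω i‖ := real_inner_le_norm _ _
        _ ≤ ε * 1 := by
            apply mul_le_mul (norm_sub_rev u v ▸ hv) _ (norm_nonneg _) hε0.le
            simpa [mem_closedBall, dist_zero_right] using hsub (hω i)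
        _ = ε := mul_one ε
    have := inner_sub_left (𝕜 := ℝ) v u (ω i)
    linarith
  have h8 : suppFn K u ≤ suppFn K v + ε := suppFn_le_add hne hcpt hsub hv
  have h9 := hup (ω i) hωiH
  linarith

lemma unifOn_prob {d : ℕ} {K : Set (Euc d)} (hK0 : volume K ≠ 0) (hKtop : volume K ≠ ⊤) :
    IsProbabilityMeasure (unifOn K) := by
  constructor
  rw [unifOn, Measure.smul_apply, Measure.restrict_apply MeasurableSet.univ, univ_inter,
    smul_eq_mul, ENNReal.inv_mul_cancel hK0 hKtop]

lemma prob_miss {d n : ℕ} {K : Set (Euc d)} (hK0 : volume K ≠ 0) (hKtop : volume K ≠ ⊤)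
    {c : Set (Euc d)} (hc : MeasurableSet c) {p : ℝ} (hp0 : 0 ≤ p)
    (hp : ENNReal.ofReal p ≤ unifOn K c) :
    jointLaw n (unifOn K) {ω | ∀ i, ω i ∉ c} ≤ ENNReal.ofReal (Real.exp (-(n * p))) := by
  set μ := unifOn K with hμ
  haveI : IsProbabilityMeasure μ := unifOn_prob hK0 hKtop
  have hset : {ω : Fin n → Euc d | ∀ i, ω i ∉ c} = Set.pi univ (fun _ => cᶜ) := by
    ext ω; simp [Set.mem_pi]
  rw [jointLaw, hset, Measure.pi_pi]
  have hμc1 : μ c ≤ 1 := prob_le_one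
  have hμcne : μ c ≠ ⊤ := (hμc1.trans_lt (by norm_num)).ne
  set m := (μ c).toReal with hm
  have hm0 : 0 ≤ m := ENNReal.toReal_nonneg
  have hm1 : m ≤ 1 := by
    rw [hm]
    exact ENNReal.toReal_le_of_le_ofReal one_pos.le (by simpa using hμc1)
  have hpm : p ≤ m := by
    have := hp.trans_eq (ENNReal.ofReal_toReal hμcne).symm
    exact (ENNReal.ofReal_le_ofReal_iff hm0).1 this
  have hcompl : μ cᶜ = ENNReal.ofReal (1 - m) := by
    rw [measure_compl hc (by finiteness), measure_univ]
    rw [show μ c = ENNReal.ofReal m from (ENNReal.ofReal_toReal hμcne).symm]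
    rw [← ENNReal.ofReal_one, ← ENNReal.ofReal_sub _ hm0]
  rw [hcompl, Finset.prod_const, Finset.card_univ, Fintype.card_fin,
    ← ENNReal.ofReal_pow (by linarith)]
  apply ENNReal.ofReal_le_ofReal
  calc (1 - m)^n ≤ (1 - p)^n := pow_le_pow_left₀ (by linarith) (by linarith) n
    _ ≤ (Real.exp (-p))^n := by
        apply pow_le_pow_left₀ (by linarith)
        linarith [Real.add_one_le_exp (-p)]
    _ = Real.exp (-(n * p)) := by
        rw [← Real.exp_nat_mul]; ring_nf

lemma dH_le_two {d : ℕ} {A B : Set (Euc d)} (hA : A.Nonempty) (hB : B.Nonempty)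
    (hAs : A ⊆ closedBall 0 1) (hBs : B ⊆ closedBall 0 1) :
    hausdorffDist A B ≤ 2 := by
  obtain ⟨b₀, hb₀⟩ := hB
  obtain ⟨a₀, ha₀⟩ := hA
  apply hausdorffDist_le_of_infDist (by norm_num)
  · intro x hx
    calc infDist x B ≤ dist x b₀ := infDist_le_dist_of_mem hb₀
      _ ≤ dist x 0 + dist 0 b₀ := dist_triangle _ _ _
      _ ≤ 1 + 1 := by
          refine add_le_add ?_ ?_
          · exact hAs hx
          · rw [dist_comm]; exact hBs hb₀
      _ = 2 := by norm_num
  · intro y hy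
    calc infDist y A ≤ dist y a₀ := infDist_le_dist_of_mem ha₀
      _ ≤ dist y 0 + dist 0 a₀ := dist_triangle _ _ _
      _ ≤ 1 + 1 := by
          refine add_le_add ?_ ?_
          · exact hBs hy
          · rw [dist_comm]; exact hAs ha₀
      _ = 2 := by norm_num

lemma master {d n : ℕ} (hd : 1 ≤ d) (hn : 1 ≤ n) {r : ℝ} (hr0 : 0 < r) {q : ℝ} (hq0 : 0 ≤ q)
    {K : Set (Euc d)} (hK : K ∈ Kdr1 d r) {ε : ℝ} (hε0 : 0 < ε) (hεr : ε ≤ r) (hε1 : ε ≤ 1) :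
    ∫⁻ ω, ENNReal.ofReal (hausdorffDist (hullOf ω) K ^ q) ∂(jointLaw n (unifOn K))
      ≤ ENNReal.ofReal ((3*ε)^q + ((4*Real.sqrt d + 5)/ε)^d * (2^q *
          Real.exp (-(n * ((Real.sqrt (r*ε)/2)^(d-1) * (ε/2)))))) := by
  classical
  obtain ⟨⟨hconv, hcpt, hint⟩, hsub, hroll⟩ := hK
  have hne : K.Nonempty := hint.mono interior_subset
  have hKmeas : MeasurableSet K := hcpt.isClosed.measurableSet
  have hK0 : volume K ≠ 0 := by
    have h1 : 0 < volume (interior K) := isOpen_interior.measure_pos volume hint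
    exact (h1.trans_le (measure_mono interior_subset)).ne'
  have hKtop : volume K ≠ ⊤ := hcpt.measure_lt_top.ne
  set μ := unifOn K with hμdef
  haveI : IsProbabilityMeasure μ := unifOn_prob hK0 hKtop
  set ν := jointLaw n μ with hνdef
  haveI : IsProbabilityMeasure ν := by
    rw [hνdef, jointLaw]; infer_instance
  obtain ⟨S, hSunit, hSnet, hScard⟩ := exists_net d hd hε0 hε1
  set p : ℝ := (Real.sqrt (r*ε)/2)^(d-1) * (ε/2) with hpdef
  have hp0 : 0 ≤ p := by rw [hpdef]; positivity
  have hcap : ∀ v ∈ S, ENNReal.ofReal p ≤ μ (cap K v ε) := fun v hv =>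
    cap_measure_lb hd hr0 ⟨⟨hconv, hcpt, hint⟩, hsub, hroll⟩ (hSunit v hv) hε0 hεr
  -- a.e. all points in K
  set G : Set (Fin n → Euc d) := Set.pi univ (fun _ => K) with hGdef
  have hGmeas : MeasurableSet G := MeasurableSet.univ_pi fun _ => hKmeas
  have hμK : μ K = 1 := by
    rw [hμdef, unifOn, Measure.smul_apply, Measure.restrict_apply hKmeas, inter_self,
      smul_eq_mul, ENNReal.inv_mul_cancel hK0 hKtop]
  have hGfull : ν G = 1 := by
    rw [hνdef, jointLaw, hGdef, Measure.pi_pi]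
    simp [hμK]
  have hae : ∀ᵐ ω ∂ν, ω ∈ G := by
    rw [ae_iff]
    have : {ω : Fin n → Euc d | ¬ ω ∈ G} = Gᶜ := rfl
    rw [this, measure_compl hGmeas (by finiteness), hGfull, measure_univ, tsub_self]
  set Apiv : Euc d → Set (Fin n → Euc d) := fun v => Set.pi univ (fun _ => (cap K v ε)ᶜ)
    with hApiv
  have hApivMeas : ∀ v, MeasurableSet (Apiv v) := fun v =>
    MeasurableSet.univ_pi fun _ => ((cap_closed hcpt.isClosed v ε).measurableSet).compl
  have hbound : ∀ᵐ ω ∂ν, ENNReal.ofReal (hausdorffDist (hullOf ω) K ^ q) ≤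
      ENNReal.ofReal ((3*ε)^q) +
        ∑ v ∈ S, (Apiv v).indicator (fun _ => ENNReal.ofReal (2^q)) ω := by
    filter_upwards [hae] with ω hωG
    have hω : ∀ i, ω i ∈ K := fun i => hωG i (mem_univ i)
    by_cases hcase : hausdorffDist (hullOf ω) K ≤ 3*ε
    · apply le_trans _ le_self_add
      apply ENNReal.ofReal_le_ofReal
      exact Real.rpow_le_rpow hausdorffDist_nonneg hcase hq0
    · push_neg at hcase
      obtain ⟨v, hvS, hmiss⟩ := bad_event_subset hn hconv hcpt hne hsub hε0 S hSnet hω hcase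
      have hωA : ω ∈ Apiv v := by
        rw [hApiv]
        intro i _
        exact hmiss i
      have h2 : ENNReal.ofReal (hausdorffDist (hullOf ω) K ^ q) ≤ ENNReal.ofReal (2^q) := by
        apply ENNReal.ofReal_le_ofReal
        apply Real.rpow_le_rpow hausdorffDist_nonneg _ hq0
        apply dH_le_two _ hne _ hsub
        · exact ⟨ω ⟨0, hn⟩, subset_convexHull ℝ _ ⟨⟨0, hn⟩, rfl⟩⟩
        · exact (convexHull_min (by rintro x ⟨i, rfl⟩; exact hω i) hconv).trans hsub
      have h3 : ENNReal.ofReal (2^q) =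
          (Apiv v).indicator (fun _ => ENNReal.ofReal (2^q)) ω := by
        rw [Set.indicator_of_mem hωA]
      apply le_add_left
      rw [h3] at h2
      exact h2.trans (Finset.single_le_sum (f := fun v =>
        (Apiv v).indicator (fun _ => ENNReal.ofReal (2^q)) ω) (fun _ _ => zero_le) hvS)
  calc ∫⁻ ω, ENNReal.ofReal (hausdorffDist (hullOf ω) K ^ q) ∂ν
      ≤ ∫⁻ ω, (ENNReal.ofReal ((3*ε)^q) +
          ∑ v ∈ S, (Apiv v).indicator (fun _ => ENNReal.ofReal (2^q)) ω) ∂ν :=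
        lintegral_mono_ae hbound
    _ = ENNReal.ofReal ((3*ε)^q) +
        ∑ v ∈ S, ENNReal.ofReal (2^q) * ν (Apiv v) := by
        rw [lintegral_add_left measurable_const, lintegral_const, measure_univ, mul_one]
        congr 1
        rw [lintegral_finset_sum]
        · exact Finset.sum_congr rfl fun v _ => lintegral_indicator_const (hApivMeas v) _
        · exact fun v _ => measurable_const.indicator (hApivMeas v)
    _ ≤ ENNReal.ofReal ((3*ε)^q) +
        ∑ v ∈ S, ENNReal.ofReal (2^q) * ENNReal.ofReal (Real.exp (-(n * p))) := by
        apply add_le_add_right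
        apply Finset.sum_le_sum
        intro v hv
        apply mul_le_mul_right
        have : Apiv v = {ω : Fin n → Euc d | ∀ i, ω i ∉ cap K v ε} := by
          ext ω; simp [hApiv, Set.mem_pi]
        rw [this]
        exact prob_miss hK0 hKtop (cap_closed hcpt.isClosed v ε).measurableSet hp0 (hcap v hv)
    _ ≤ ENNReal.ofReal ((3*ε)^q) + ENNReal.ofReal (((4*Real.sqrt d + 5)/ε)^d) *
        (ENNReal.ofReal (2^q) * ENNReal.ofReal (Real.exp (-(n * p)))) := by
        apply add_le_add_right
        rw [Finset.sum_const]
        rw [nsmul_eq_mul]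
        apply mul_le_mul_left
        rw [show ((S.card : ℝ≥0∞)) = ENNReal.ofReal (S.card : ℝ) by
          rw [ENNReal.ofReal_natCast]]
        exact ENNReal.ofReal_le_ofReal hScard
    _ = ENNReal.ofReal ((3*ε)^q + ((4*Real.sqrt d + 5)/ε)^d * (2^q *
          Real.exp (-(n * p)))) := by
        rw [← ENNReal.ofReal_mul (by positivity), ← ENNReal.ofReal_mul (by positivity),
          ← ENNReal.ofReal_add (by positivity) (by positivity)]

lemma trivial_bound {d n : ℕ} (hn : 1 ≤ n) {q : ℝ} (hq0 : 0 ≤ q) {r : ℝ}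
    {K : Set (Euc d)} (hK : K ∈ Kdr1 d r) :
    ∫⁻ ω, ENNReal.ofReal (hausdorffDist (hullOf ω) K ^ q) ∂(jointLaw n (unifOn K))
      ≤ ENNReal.ofReal (2^q) := by
  obtain ⟨⟨hconv, hcpt, hint⟩, hsub, hroll⟩ := hK
  have hne : K.Nonempty := hint.mono interior_subset
  have hKmeas : MeasurableSet K := hcpt.isClosed.measurableSet
  have hK0 : volume K ≠ 0 := by
    have h1 : 0 < volume (interior K) := isOpen_interior.measure_pos volume hint
    exact (h1.trans_le (measure_mono interior_subset)).ne'
  have hKtop : volume K ≠ ⊤ := hcpt.measure_lt_top.ne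
  set μ := unifOn K with hμdef
  haveI : IsProbabilityMeasure μ := unifOn_prob hK0 hKtop
  set ν := jointLaw n μ with hνdef
  haveI : IsProbabilityMeasure ν := by
    rw [hνdef, jointLaw]; infer_instance
  set G : Set (Fin n → Euc d) := Set.pi univ (fun _ => K) with hGdef
  have hGmeas : MeasurableSet G := MeasurableSet.univ_pi fun _ => hKmeas
  have hμK : μ K = 1 := by
    rw [hμdef, unifOn, Measure.smul_apply, Measure.restrict_apply hKmeas, inter_self,
      smul_eq_mul, ENNReal.inv_mul_cancel hK0 hKtop]
  have hGfull : ν G = 1 := by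
    rw [hνdef, jointLaw, hGdef, Measure.pi_pi]
    simp [hμK]
  have hae : ∀ᵐ ω ∂ν, ω ∈ G := by
    rw [ae_iff]
    have : {ω : Fin n → Euc d | ¬ ω ∈ G} = Gᶜ := rfl
    rw [this, measure_compl hGmeas (by finiteness), hGfull, measure_univ, tsub_self]
  calc ∫⁻ ω, ENNReal.ofReal (hausdorffDist (hullOf ω) K ^ q) ∂ν
      ≤ ∫⁻ _ω, ENNReal.ofReal (2^q) ∂ν := by
        apply lintegral_mono_ae
        filter_upwards [hae] with ω hωG
        have hω : ∀ i, ω i ∈ K := fun i => hωG i (mem_univ i)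
        apply ENNReal.ofReal_le_ofReal
        apply Real.rpow_le_rpow hausdorffDist_nonneg _ hq0
        apply dH_le_two _ hne _ hsub
        · exact ⟨ω ⟨0, hn⟩, subset_convexHull ℝ _ ⟨⟨0, hn⟩, rfl⟩⟩
        · exact (convexHull_min (by rintro x ⟨i, rfl⟩; exact hω i) hconv).trans hsub
    _ = ENNReal.ofReal (2^q) := by rw [lintegral_const, measure_univ, mul_one]

lemma p_eq {d : ℕ} (hd : 1 ≤ d) {r ε : ℝ} (hr0 : 0 < r) (hε0 : 0 < ε) :
    (Real.sqrt (r*ε)/2)^(d-1) * (ε/2) =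
      (r ^ (((d:ℝ)-1)/2) / 2^d) * ε ^ (((d:ℝ)+1)/2) := by
  have step1 : (Real.sqrt (r*ε))^(d-1) = (r*ε) ^ (((d:ℝ)-1)/2) := by
    rw [Real.sqrt_eq_rpow, ← Real.rpow_natCast ((r*ε)^((1:ℝ)/2)) (d-1),
      ← Real.rpow_mul (by positivity)]
    congr 1
    push_cast [Nat.cast_sub hd]
    ring
  have step2 : (r*ε) ^ (((d:ℝ)-1)/2) = r ^ (((d:ℝ)-1)/2) * ε ^ (((d:ℝ)-1)/2) :=
    Real.mul_rpow hr0.le hε0.le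
  have step4 : ε ^ (((d:ℝ)-1)/2) * ε = ε ^ (((d:ℝ)+1)/2) := by
    nth_rewrite 2 [← Real.rpow_one ε]
    rw [← Real.rpow_add hε0]
    congr 1
    ring
  have step3 : (2:ℝ)^d = 2^(d-1) * 2 := by
    rw [← pow_succ]
    congr 1
    omega
  rw [div_pow, step1, step2, step3]
  field_simp
  nlinarith [step4, Real.rpow_nonneg hr0.le (((d:ℝ)-1)/2), Real.rpow_nonneg hε0.le (((d:ℝ)-1)/2),
    pow_pos (by norm_num : (0:ℝ) < 2) (d-1)]

theorem stmt10 (d : ℕ) (hd : 1 ≤ d) (r : ℝ) (hr0 : 0 < r) (hr1 : r ≤ 1)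
    (q : ℝ) (hq : 1 ≤ q) :
    ∃ C > (0:ℝ), ∀ n : ℕ, 2 ≤ n → ∀ K ∈ Kdr1 d r,
      ∫⁻ ω, ENNReal.ofReal (hausdorffDist (hullOf ω) K ^ q) ∂(jointLaw n (unifOn K))
        ≤ ENNReal.ofReal (C * (Real.log n / n) ^ (2*q/((d:ℝ)+1))) := by
  have hq0 : (0:ℝ) ≤ q := by linarith
  have hd1 : (1:ℝ) ≤ d := by exact_mod_cast hd
  set c₀ : ℝ := r ^ (((d:ℝ)-1)/2) / 2^d with hc₀
  have hc₀pos : 0 < c₀ := by rw [hc₀]; positivity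
  set A : ℝ := ((d:ℝ) + q + 1)/c₀ with hA
  have hApos : 0 < A := by rw [hA]; positivity
  set s₂ : ℝ := 2/((d:ℝ)+1) with hs₂
  have hs₂pos : 0 < s₂ := by rw [hs₂]; positivity
  have hs₂1 : s₂ ≤ 1 := by
    rw [hs₂, div_le_one (by linarith)]
    linarith
  set β : ℝ := 2*q/((d:ℝ)+1) with hβ
  have hβeq : β = s₂ * q := by rw [hβ, hs₂]; ring
  have hβpos : 0 < β := by rw [hβ]; positivity
  have hβq : β ≤ q := by
    rw [hβeq]
    calc s₂ * q ≤ 1 * q := mul_le_mul_of_nonneg_right hs₂1 hq0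
      _ = q := one_mul q
  set B : ℝ := 4*Real.sqrt d + 5 with hB
  have hBpos : 0 < B := by rw [hB]; positivity
  have hlog2 : 0 < Real.log 2 := Real.log_pos one_lt_two
  have hlog2le : Real.log 2 ≤ 1 := by
    nlinarith [Real.log_le_sub_one_of_pos (by norm_num : (0:ℝ) < 2)]
  set κ : ℝ := (A * Real.log 2) ^ (-s₂) + 1 with hκ
  have hκpos : 0 < κ := by
    rw [hκ]
    have := Real.rpow_nonneg (by positivity : (0:ℝ) ≤ A * Real.log 2) (-s₂)
    linarith
  set x₀ : ℝ := r ^ (((d:ℝ)+1)/2) with hx₀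
  have hx₀pos : 0 < x₀ := by rw [hx₀]; positivity
  set C : ℝ := 3^q * A^β + B^d * κ^d * (2^q) * (Real.log 2)^(-q) + 2^q * (A/x₀)^β + 1 with hC
  have hCpos : 0 < C := by
    rw [hC]
    have h1 : (0:ℝ) ≤ 3^q * A^β := by positivity
    have h2 : (0:ℝ) ≤ B^d * κ^d * (2^q) * (Real.log 2)^(-q) := by positivity
    have h3 : (0:ℝ) ≤ 2^q * (A/x₀)^β := by positivity
    linarith
  refine ⟨C, hCpos, fun n hn K hK => ?_⟩
  have hn1 : 1 ≤ n := by omega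
  have hn2R : (2:ℝ) ≤ n := by exact_mod_cast hn
  have hnR1 : (1:ℝ) ≤ n := by linarith
  have hnpos : (0:ℝ) < n := by linarith
  have hlogn : 0 < Real.log n := Real.log_pos (by linarith)
  have hlog2n : Real.log 2 ≤ Real.log n := Real.log_le_log (by norm_num) hn2R
  set t : ℝ := Real.log n / n with ht
  have htpos : 0 < t := by rw [ht]; positivity
  have ht_lb : Real.log 2 / n ≤ t := by
    rw [ht]
    gcongr
  set ε : ℝ := (A*t) ^ s₂ with hε
  have hεpos : 0 < ε := by rw [hε]; positivity
  have hεpow : ε ^ (((d:ℝ)+1)/2) = A * t := by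
    rw [hε, ← Real.rpow_mul (by positivity)]
    have : s₂ * (((d:ℝ)+1)/2) = 1 := by
      rw [hs₂]
      field_simp
    rw [this, Real.rpow_one]
  by_cases hcase : ε ≤ r
  · -- main case
    have hε1 : ε ≤ 1 := hcase.trans hr1
    apply le_trans (master hd hn1 hr0 hq0 hK hεpos hcase hε1)
    apply ENNReal.ofReal_le_ofReal
    have hp_eq : (Real.sqrt (r*ε)/2)^(d-1) * (ε/2) = c₀ * (A * t) := by
      rw [p_eq hd hr0 hεpos, hεpow, hc₀]
    have hnp : (n:ℝ) * ((Real.sqrt (r*ε)/2)^(d-1) * (ε/2)) = ((d:ℝ) + q + 1) * Real.log n := by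
      rw [hp_eq, ht, hA]
      field_simp
    have hexp : Real.exp (-((n:ℝ) * ((Real.sqrt (r*ε)/2)^(d-1) * (ε/2)))) =
        (n:ℝ) ^ (-((d:ℝ) + q + 1)) := by
      rw [hnp, Real.rpow_def_of_pos hnpos]
      congr 1
      ring
    rw [hexp]
    have hεq : ε ^ q = A^β * t^β := by
      rw [hε, ← Real.rpow_mul (by positivity : (0:ℝ) ≤ A*t), ← hβeq]
      exact Real.mul_rpow hApos.le htpos.le
    have hterm1 : (3*ε)^q = 3^q * (A^β * t^β) := by
      rw [Real.mul_rpow (by norm_num) hεpos.le, hεq]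
    have hεinv : ε⁻¹ ≤ κ * n := by
      have hz : (A * (Real.log 2 / n)) ^ s₂ ≤ ε := by
        rw [hε]
        apply Real.rpow_le_rpow (by positivity) _ hs₂pos.le
        exact mul_le_mul_of_nonneg_left ht_lb hApos.le
      have hzpos : (0:ℝ) < (A * (Real.log 2 / n)) ^ s₂ := by positivity
      have h1 : ε⁻¹ ≤ ((A * (Real.log 2 / n)) ^ s₂)⁻¹ := by
        exact inv_anti₀ hzpos hz
      have h2 : ((A * (Real.log 2 / n)) ^ s₂)⁻¹ = (A*Real.log 2)^(-s₂) * (n:ℝ)^s₂ := by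
        rw [← Real.rpow_neg (by positivity),
          show A * (Real.log 2 / n) = (A*Real.log 2) * ((n:ℝ))⁻¹ by ring,
          Real.mul_rpow (by positivity) (by positivity),
          Real.inv_rpow (by positivity), ← Real.rpow_neg (by positivity), neg_neg]
      have h3 : (A*Real.log 2)^(-s₂) * (n:ℝ)^s₂ ≤ κ * n := by
        apply mul_le_mul
        · rw [hκ]; linarith
        · calc (n:ℝ)^s₂ ≤ (n:ℝ)^(1:ℝ) := Real.rpow_le_rpow_of_exponent_le hnR1 hs₂1
            _ = n := Real.rpow_one n
        · positivity
        · exact hκpos.le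
      rw [h2] at h1
      exact h1.trans h3
    have hkey2 : (n:ℝ)^(-(q+1)) ≤ (Real.log 2)^(-q) * t^β := by
      have h3 : (Real.log 2 / n)^β ≤ t^β := Real.rpow_le_rpow (by positivity) ht_lb hβpos.le
      have h4 : (Real.log 2/(n:ℝ))^β = (Real.log 2)^β * (n:ℝ)^(-β) := by
        rw [show Real.log 2 / (n:ℝ) = Real.log 2 * ((n:ℝ))⁻¹ by ring,
          Real.mul_rpow (by positivity) (by positivity),
          Real.inv_rpow (by positivity), ← Real.rpow_neg (by positivity)]
      have h5 : (Real.log 2)^q ≤ (Real.log 2)^β := Real.rpow_le_rpow_of_exponent_ge hlog2 hlog2le hβq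
      have h6 : (n:ℝ)^(-(q+1)) ≤ (n:ℝ)^(-β) := Real.rpow_le_rpow_of_exponent_le hnR1 (by linarith)
      have h7 : (Real.log 2)^q * (n:ℝ)^(-(q+1)) ≤ t^β := by
        calc (Real.log 2)^q * (n:ℝ)^(-(q+1)) ≤ (Real.log 2)^β * (n:ℝ)^(-β) :=
              mul_le_mul h5 h6 (by positivity) (by positivity)
          _ = (Real.log 2/(n:ℝ))^β := h4.symm
          _ ≤ t^β := h3
      have h8 : (Real.log 2)^(-q) * ((Real.log 2)^q * (n:ℝ)^(-(q+1))) = (n:ℝ)^(-(q+1)) := by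
        rw [← mul_assoc, ← Real.rpow_add hlog2]
        norm_num
      calc (n:ℝ)^(-(q+1)) = (Real.log 2)^(-q) * ((Real.log 2)^q * (n:ℝ)^(-(q+1))) := h8.symm
        _ ≤ (Real.log 2)^(-q) * t^β := by
            apply mul_le_mul_of_nonneg_left h7 (by positivity)
    have hT2 : (B/ε)^d * (2^q * (n:ℝ)^(-((d:ℝ)+q+1))) ≤
        B^d * κ^d * 2^q * ((Real.log 2)^(-q) * t^β) := by
      have e1 : (B/ε)^d = B^d * (ε⁻¹)^d := by
        rw [div_pow, div_eq_mul_inv, inv_pow]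
      have e2 : (ε⁻¹)^d * (n:ℝ)^(-((d:ℝ)+q+1)) ≤ κ^d * (n:ℝ)^(-(q+1)) := by
        calc (ε⁻¹)^d * (n:ℝ)^(-((d:ℝ)+q+1)) ≤ (κ*n)^d * (n:ℝ)^(-((d:ℝ)+q+1)) := by
              apply mul_le_mul_of_nonneg_right (pow_le_pow_left₀ (by positivity) hεinv d)
              positivity
          _ = κ^d * ((n:ℝ)^(d:ℕ) * (n:ℝ)^(-((d:ℝ)+q+1))) := by rw [mul_pow]; ring
          _ = κ^d * (n:ℝ)^(-(q+1)) := by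
              congr 1
              rw [← Real.rpow_natCast (n:ℝ) d, ← Real.rpow_add hnpos]
              congr 1
              ring
      calc (B/ε)^d * (2^q * (n:ℝ)^(-((d:ℝ)+q+1)))
          = B^d * 2^q * ((ε⁻¹)^d * (n:ℝ)^(-((d:ℝ)+q+1))) := by rw [e1]; ring
        _ ≤ B^d * 2^q * (κ^d * (n:ℝ)^(-(q+1))) := by
            apply mul_le_mul_of_nonneg_left e2 (by positivity)
        _ ≤ B^d * 2^q * (κ^d * ((Real.log 2)^(-q) * t^β)) := by
            apply mul_le_mul_of_nonneg_left (mul_le_mul_of_nonneg_left hkey2 (by positivity))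
              (by positivity)
        _ = B^d * κ^d * 2^q * ((Real.log 2)^(-q) * t^β) := by ring
    have hfin : (3*ε)^q + (B/ε)^d * (2^q * (n:ℝ)^(-((d:ℝ)+q+1))) ≤ C * t^β := by
      rw [hterm1]
      have hrest : 0 ≤ (2^q * (A/x₀)^β + 1) * t^β := by positivity
      have hCt : C * t^β = 3^q * (A^β * t^β) +
          B^d * κ^d * 2^q * ((Real.log 2)^(-q) * t^β) + (2^q * (A/x₀)^β + 1) * t^β := by
        rw [hC]; ring
      linarith [hT2]
    exact hfin
  · -- trivial case
    push_neg at hcase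
    apply le_trans (trivial_bound hn1 hq0 hK)
    apply ENNReal.ofReal_le_ofReal
    have htlb : x₀ / A ≤ t := by
      by_contra hcon
      push_neg at hcon
      have h1 : A * t < x₀ := by
        rw [mul_comm]
        exact (lt_div_iff₀ hApos).1 hcon
      have h2 : ε ≤ r := by
        rw [hε]
        calc (A*t)^s₂ ≤ x₀^s₂ := Real.rpow_le_rpow (by positivity) h1.le hs₂pos.le
          _ = r := by
              rw [hx₀, ← Real.rpow_mul hr0.le]
              have : ((d:ℝ)+1)/2 * s₂ = 1 := by rw [hs₂]; field_simp
              rw [this, Real.rpow_one]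
      linarith
    have h9 : (x₀/A)^β ≤ t^β := Real.rpow_le_rpow (by positivity) htlb hβpos.le
    have h10 : (A/x₀)^β * (x₀/A)^β = 1 := by
      rw [← Real.mul_rpow (by positivity) (by positivity),
        show A/x₀ * (x₀/A) = 1 by field_simp]
      exact Real.one_rpow β
    calc (2:ℝ)^q = 2^q * ((A/x₀)^β * (x₀/A)^β) := by rw [h10, mul_one]
      _ ≤ 2^q * ((A/x₀)^β * t^β) := by
          apply mul_le_mul_of_nonneg_left (mul_le_mul_of_nonneg_left h9 (by positivity))
            (by positivity)
      _ = (2^q * (A/x₀)^β) * t^β := by ring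
      _ ≤ C * t^β := by
          apply mul_le_mul_of_nonneg_right _ (by positivity)
          rw [hC]
          have h1 : (0:ℝ) ≤ 3^q * A^β := by positivity
          have h2 : (0:ℝ) ≤ B^d * κ^d * (2^q) * (Real.log 2)^(-q) := by positivity
          linarith
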